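/- Let S and A be maps from a compact interval [a,b] to the nonempty compact subsets of ℝⁿ, both continuous with respect to the Hausdorff distance. Let x : [a,b] → ℝⁿ be continuous with x(a) ∈ int(S(a)) and x(b) ∉ int(S(b)). If bd(S(t)) ⊆ A(t) for all t ∈ [a,b], then there exists t' ∈ [a,b] such that x(t') ∈ A(t'). -/
import Mathlib


open Metric Set TopologicalSpace

/-- Auxiliary: if `x t ∉ S t` and the ball of radius `δ` around `x t` misses the frontier
of `S t`, then `infDist (x t) (S t) ≥ δ`. -/
lemma bubble_aux {E : Type*} [NormedAddCommGroup E] [NormedSpace ℝ E]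
    (C : Set E) (hC : IsClosed C) (hCne : C.Nonempty) (p : E) (δ : ℝ) (hδ : 0 < δ)
    (hp : p ∉ C) (hball : Disjoint (ball p δ) (frontier C)) :
    δ ≤ Metric.infDist p C := by
  have hcover : ball p δ ⊆ Cᶜ ∪ interior C := by
    intro y hy
    by_cases hyC : y ∈ C
    · have : y ∈ interior C ∪ frontier C := by
        rw [← closure_eq_interior_union_frontier, hC.closure_eq]
        exact hyC
      rcases this with h | h
      · exact Or.inr h
      · exact absurd h (disjoint_left.mp hball hy)
    · exact Or.inl hyC
  have hdisj : Disjoint (Cᶜ : Set E) (interior C) :=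
    disjoint_left.mpr fun y hy hy' => hy (interior_subset hy')
  have hsub : ball p δ ⊆ Cᶜ := by
    rcases (convex_ball p δ).isPreconnected.subset_or_subset hC.isOpen_compl
      isOpen_interior hdisj hcover with h | h
    · exact h
    · exact absurd (interior_subset (h (mem_ball_self hδ))) hp
  by_contra hlt
  push_neg at hlt
  obtain ⟨y, hyC, hyd⟩ := (Metric.infDist_lt_iff hCne).mp hlt
  exact (hsub (by rwa [mem_ball, dist_comm])) hyC


lemma infDist_continuousOn {α : Type*} [MetricSpace α]
    (f : ℝ → α) (K : ℝ → NonemptyCompacts α) (s : Set ℝ)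
    (hf : ContinuousOn f s) (hK : ContinuousOn K s) :
    ContinuousOn (fun t => Metric.infDist (f t) (K t : Set α)) s := by
  rw [Metric.continuousOn_iff] at *
  intro t ht ε hε
  obtain ⟨δ₁, hδ₁, h₁⟩ := hf t ht (ε / 2) (by linarith)
  obtain ⟨δ₂, hδ₂, h₂⟩ := hK t ht (ε / 2) (by linarith)
  refine ⟨min δ₁ δ₂, lt_min hδ₁ hδ₂, fun u hu hdu => ?_⟩
  have e1 : dist (Metric.infDist (f u) (K u : Set α)) (Metric.infDist (f t) (K u : Set α))
      ≤ dist (f u) (f t) := by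
    have := (Metric.lipschitz_infDist_pt (K u : Set α)).dist_le_mul (f u) (f t)
    simpa using this
  have e2 : dist (Metric.infDist (f t) (K u : Set α)) (Metric.infDist (f t) (K t : Set α))
      ≤ dist (K u) (K t) := by
    have := (Metric.lipschitz_infDist_set (f t)).dist_le_mul (K u) (K t)
    simpa using this
  have h1' := h₁ u hu (lt_of_lt_of_le hdu (min_le_left _ _))
  have h2' := h₂ u hu (lt_of_lt_of_le hdu (min_le_right _ _))
  calc dist (Metric.infDist (f u) (K u : Set α)) (Metric.infDist (f t) (K t : Set α))
      ≤ _ + _ := dist_triangle _ (Metric.infDist (f t) (K u : Set α)) _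
    _ < ε := by linarith

/-- **the "bubble" lemma.** Let `S, A` be continuous (w.r.t. the Hausdorff
distance) maps from `[a,b]` to the nonempty compact subsets of `ℝⁿ`, and `x` a continuous
curve with `x(a) ∈ int(S(a))` and `x(b) ∉ int(S(b))`. If `bd(S(t)) ⊆ A(t)` for all
`t ∈ [a,b]`, then `x(t') ∈ A(t')` for some `t' ∈ [a,b]`. -/
theorem bubble_lemma
    {n : ℕ} (a b : ℝ) (hab : a ≤ b)
    (S A : ℝ → NonemptyCompacts (EuclideanSpace ℝ (Fin n)))
    (hS : ContinuousOn S (Set.Icc a b)) (hA : ContinuousOn A (Set.Icc a b))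
    (x : ℝ → EuclideanSpace ℝ (Fin n)) (hx : ContinuousOn x (Set.Icc a b))
    (hxa : x a ∈ interior (S a : Set (EuclideanSpace ℝ (Fin n))))
    (hxb : x b ∉ interior (S b : Set (EuclideanSpace ℝ (Fin n))))
    (hbd : ∀ t ∈ Set.Icc a b,
      frontier (S t : Set (EuclideanSpace ℝ (Fin n))) ⊆ (A t : Set (EuclideanSpace ℝ (Fin n)))) :
    ∃ t' ∈ Set.Icc a b, x t' ∈ (A t' : Set (EuclideanSpace ℝ (Fin n))) := by
  by_contra hcon
  push_neg at hcon
  -- `x b ∉ S b`, else it would be on the frontier, hence in `A b`.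
  have hxbS : x b ∉ (S b : Set (EuclideanSpace ℝ (Fin n))) := by
    intro hmem
    have : x b ∈ frontier (S b : Set (EuclideanSpace ℝ (Fin n))) := by
      rw [frontier, (S b).isCompact.isClosed.closure_eq]
      exact ⟨hmem, hxb⟩
    exact hcon b (right_mem_Icc.mpr hab) (hbd b (right_mem_Icc.mpr hab) this)
  -- distance functions
  have hF : ContinuousOn (fun t => Metric.infDist (x t) (S t : Set (EuclideanSpace ℝ (Fin n))))
      (Set.Icc a b) :=
    infDist_continuousOn x S _ hx hS
  have hG : ContinuousOn (fun t => Metric.infDist (x t) (A t : Set (EuclideanSpace ℝ (Fin n))))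
      (Set.Icc a b) :=
    infDist_continuousOn x A _ hx hA
  -- minimum of the distance to `A`
  obtain ⟨t0, ht0, hmin⟩ := isCompact_Icc.exists_isMinOn (nonempty_Icc.mpr hab) hG
  set δ : ℝ := Metric.infDist (x t0) (A t0 : Set (EuclideanSpace ℝ (Fin n))) with hδdef
  have hδpos : 0 < δ := by
    rw [hδdef]
    exact ((A t0).isCompact.isClosed.notMem_iff_infDist_pos (A t0).nonempty).mp
      (hcon t0 ht0)
  -- key fact: if `x t ∉ S t` then its distance to `S t` is at least `δ`
  have key : ∀ t ∈ Set.Icc a b, x t ∉ (S t : Set (EuclideanSpace ℝ (Fin n))) →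
      δ ≤ Metric.infDist (x t) (S t : Set (EuclideanSpace ℝ (Fin n))) := by
    intro t ht hxt
    apply bubble_aux _ (S t).isCompact.isClosed (S t).nonempty _ δ hδpos hxt
    refine disjoint_left.mpr fun y hy hyf => ?_
    have h1 : Metric.infDist (x t) (A t : Set (EuclideanSpace ℝ (Fin n))) ≤ dist (x t) y :=
      Metric.infDist_le_dist_of_mem (hbd t ht hyf)
    have h2 : δ ≤ Metric.infDist (x t) (A t : Set (EuclideanSpace ℝ (Fin n))) := hmin ht
    rw [mem_ball, dist_comm] at hy
    linarith
  -- IVT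
  have hFa : Metric.infDist (x a) (S a : Set (EuclideanSpace ℝ (Fin n))) = 0 :=
    Metric.infDist_zero_of_mem (interior_subset hxa)
  have hFb : δ ≤ Metric.infDist (x b) (S b : Set (EuclideanSpace ℝ (Fin n))) :=
    key b (right_mem_Icc.mpr hab) hxbS
  have : (δ / 2) ∈ Set.Icc (Metric.infDist (x a) (S a : Set (EuclideanSpace ℝ (Fin n))))
      (Metric.infDist (x b) (S b : Set (EuclideanSpace ℝ (Fin n)))) := by
    constructor <;> [rw [hFa]; skip] <;> linarith
  obtain ⟨t, ht, hFt'⟩ := intermediate_value_Icc hab hF this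
  have hFt : Metric.infDist (x t) (S t : Set (EuclideanSpace ℝ (Fin n))) = δ / 2 := hFt' 
  by_cases hmem : x t ∈ (S t : Set (EuclideanSpace ℝ (Fin n)))
  · rw [Metric.infDist_zero_of_mem hmem] at hFt
    linarith
  · have := key t ht hmem
    rw [hFt] at this
    linarith
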